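/- Let K be a commutative ring, S = K[x_1,…,x_n], and φ: S → S a flat K-algebra homomorphism with φ(x_i) = s_i·x_i for elements s_i ∈ S. For every 0 ≤ l ≤ n, the composite ∂_l ∘ ∂_{l+1} of consecutive differentials of the φ-Koszul chain complex FK_•(x_1,…,x_n) is zero; hence FK_•(x_1,…,x_n) is a chain complex of left S[Θ;φ]-modules. -/

import Mathlib

/-- The left skew polynomial ring `A[Θ;φ]`. -/
structure LeftSkewPolynomialRing (A : Type*) [CommRing A] (φ : A →+* A)
    (B : Type*) [Ring B] where
  ι : A →+* B
  θ : B
  theta_mul : ∀ a : A, θ * ι a = ι (φ a) * θ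
  basis : Function.Bijective fun f : ℕ →₀ A => f.sum fun i a => ι a * θ ^ i

noncomputable section

namespace PhiKoszul

variable {S : Type*} [CommRing S] {φ : S →+* S} {B : Type*} [Ring B] {n : ℕ}

/-- The left `B`-linear map `B → N` sending `b` to `b • v`. -/
def toSpan {N : Type*} [AddCommGroup N] [Module B N] (v : N) : B →ₗ[B] N where
  toFun b := b • v
  map_add' a b := add_smul a b v
  map_smul' a b := mul_smul a b v

/-- Extension of a family `s : Fin n → S` to `Fin (n+1)`, with value `1` at the last
index (which corresponds to the extra basis vector `u`). -/
def extOne (s : Fin n → S) (j : Fin (n + 1)) : S :=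
  if h : (j : ℕ) < n then s ⟨j, h⟩ else 1

/-- The degree-`l` term `FK_l` of the `φ`-Koszul complex: the free left
`S[Θ;φ]`-module on the `l`-element subsets of `{e_1, …, e_n, u}` (where `u`
corresponds to the last element of `Fin (n+1)`). -/
abbrev FK (B : Type*) [Ring B] (n l : ℕ) : Type _ :=
  {t : Finset (Fin (n + 1)) // t.card = l} →₀ B

/-- The coefficient with which the basis element `T \ {i}` occurs (up to sign) in the
image of the basis element `T` under the `φ`-Koszul differential: deleting `e_i` from a
wedge without `u` gives `x_i`; deleting `e_i` from a wedge with `u` gives `φ(x_i)`;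
deleting `u` gives `Θ - s_{j_1}⋯s_{j_{l-1}}`. -/
def coeff (sk : LeftSkewPolynomialRing S φ B) (x s : Fin n → S)
    (T : Finset (Fin (n + 1))) (i : Fin (n + 1)) : B :=
  if h : (i : ℕ) < n then
    (if Fin.last n ∈ T then sk.ι (φ (x ⟨i, h⟩)) else sk.ι (x ⟨i, h⟩))
  else sk.θ - sk.ι (∏ j ∈ T.erase (Fin.last n), extOne s j)

/-- The image of the basis element `T` under the `φ`-Koszul differential
`∂ : FK_{l+1} → FK_l`, namely `Σ_{i ∈ T} (-1)^{|{j ∈ T : j < i}|} coeff(T,i) • (T\{i})`. -/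
def tgt (sk : LeftSkewPolynomialRing S φ B) (x s : Fin n → S) (l : ℕ)
    (T : {t : Finset (Fin (n + 1)) // t.card = l + 1}) : FK B n l :=
  ∑ i ∈ T.1.attach,
    ((-1 : ℤ) ^ (T.1.filter fun j => j < i.1).card) •
      Finsupp.single
        ⟨T.1.erase i.1, by rw [Finset.card_erase_of_mem i.2, T.2]; rfl⟩
        (coeff sk x s T.1 i.1)

/-- The `φ`-Koszul differential `∂_{l+1} : FK_{l+1} → FK_l`, as a map of left
`S[Θ;φ]`-modules. -/
def FKd (sk : LeftSkewPolynomialRing S φ B) (x s : Fin n → S) (l : ℕ) :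
    FK B n (l + 1) →ₗ[B] FK B n l :=
  Finsupp.lsum ℕ fun T => toSpan (tgt sk x s l T)

end PhiKoszul

end

open PhiKoszul MvPolynomial

noncomputable section
section Aux

namespace PhiKoszul

variable {S : Type*} [CommRing S] {φ : S →+* S} {B : Type*} [Ring B] {n : ℕ}

/-- Sign cancellation lemma. -/
lemma sign_aux (T : Finset (Fin (n + 1))) {i j : Fin (n + 1)} (hi : i ∈ T) (hj : j ∈ T)
    (h : j < i) :
    ((-1 : ℤ) ^ (T.filter fun k => k < i).card * (-1) ^ ((T.erase i).filter fun k => k < j).card)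
      = -((-1) ^ (T.filter fun k => k < j).card *
          (-1) ^ ((T.erase j).filter fun k => k < i).card) := by
  have h1 : ((T.erase i).filter fun k => k < j) = T.filter fun k => k < j := by
    rw [Finset.filter_erase, Finset.erase_eq_of_notMem]
    simp only [Finset.mem_filter]
    exact fun hh => absurd hh.2 (not_lt.mpr h.le)
  have h2 : ((T.erase j).filter fun k => k < i) = (T.filter fun k => k < i).erase j := by
    rw [Finset.filter_erase]
  have hjmem : j ∈ T.filter fun k => k < i := Finset.mem_filter.mpr ⟨hj, h⟩
  have h3 : ((T.erase j).filter fun k => k < i).card + 1 = (T.filter fun k => k < i).card := by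
    rw [h2, Finset.card_erase_of_mem hjmem]
    exact Nat.succ_pred_eq_of_pos (Finset.card_pos.mpr ⟨j, hjmem⟩)
  rw [h1, ← h3, pow_succ]
  ring

lemma sign_lemma (T : Finset (Fin (n + 1))) {i j : Fin (n + 1)} (hi : i ∈ T) (hj : j ∈ T)
    (hij : i ≠ j) :
    ((-1 : ℤ) ^ (T.filter fun k => k < i).card * (-1) ^ ((T.erase i).filter fun k => k < j).card)
      = -((-1) ^ (T.filter fun k => k < j).card *
          (-1) ^ ((T.erase j).filter fun k => k < i).card) := by
  rcases lt_or_gt_of_ne hij with h | h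
  · have := sign_aux T hj hi h
    linarith
  · exact sign_aux T hi hj h

lemma last_of_not_lt {j : Fin (n + 1)} (h : ¬ (j : ℕ) < n) : j = Fin.last n := by
  have := j.isLt
  exact Fin.ext (by rw [Fin.val_last]; omega)

/-- The key commutation identity for the coefficients, case `i < n`, `j = last`. -/
lemma coeff_key (sk : LeftSkewPolynomialRing S φ B) (x s : Fin n → S)
    (hx : ∀ i, φ (x i) = s i * x i) (T : Finset (Fin (n + 1))) {i j : Fin (n + 1)}
    (hi : i ∈ T) (hj : j ∈ T) (hij : i ≠ j) (hin : (i : ℕ) < n) (hjn : ¬ (j : ℕ) < n) :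
    coeff sk x s T i * coeff sk x s (T.erase i) j
      = coeff sk x s T j * coeff sk x s (T.erase j) i := by
  have hjl : j = Fin.last n := last_of_not_lt hjn
  subst hjl
  have hiln : ¬ ((Fin.last n : Fin (n + 1)) : ℕ) < n := by
    rw [Fin.val_last]; exact lt_irrefl n
  have hine : i ≠ Fin.last n := hij
  have hlastT : Fin.last n ∈ T := hj
  have hlastTi : Fin.last n ∈ T.erase i := Finset.mem_erase.mpr ⟨hij.symm, hj⟩
  have hiTl : i ∈ T.erase (Fin.last n) := Finset.mem_erase.mpr ⟨hine, hi⟩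
  rw [coeff, coeff, coeff, coeff, dif_pos hin, dif_pos hin, dif_neg hiln, dif_neg hiln,
    if_pos hlastT, if_neg (by simp [Finset.mem_erase])]
  -- LHS : ι(φ x_i) * (θ - ι P')  where P' = ∏ over (T.erase i).erase last
  -- RHS : (θ - ι P) * ι(x_i)    where P  = ∏ over T.erase last
  have hP : (∏ k ∈ T.erase (Fin.last n), extOne s k)
      = extOne s i * ∏ k ∈ (T.erase (Fin.last n)).erase i, extOne s k :=
    (Finset.mul_prod_erase _ _ hiTl).symm
  have hE : extOne s i = s ⟨i, hin⟩ := dif_pos hin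
  have hswap : (T.erase (Fin.last n)).erase i = (T.erase i).erase (Fin.last n) :=
    Finset.erase_right_comm
  set P' := ∏ k ∈ (T.erase i).erase (Fin.last n), extOne s k with hP'
  rw [mul_sub, sub_mul, ← sk.theta_mul, hP, hswap, hE]
  congr 1
  rw [← map_mul, ← map_mul, hx]
  ring_nf
  rfl

/-- The coefficients commute in the required sense. -/
lemma coeff_comm (sk : LeftSkewPolynomialRing S φ B) (x s : Fin n → S)
    (hx : ∀ i, φ (x i) = s i * x i) (T : Finset (Fin (n + 1))) {i j : Fin (n + 1)}
    (hi : i ∈ T) (hj : j ∈ T) (hij : i ≠ j) :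
    coeff sk x s T i * coeff sk x s (T.erase i) j
      = coeff sk x s T j * coeff sk x s (T.erase j) i := by
  by_cases hin : (i : ℕ) < n
  · by_cases hjn : (j : ℕ) < n
    · -- both coefficients are images of ι, compose in `S`, commute
      have hne_i : Fin.last n ≠ i := by
        rintro rfl; rw [Fin.val_last] at hin; exact absurd hin (lt_irrefl n)
      have hne_j : Fin.last n ≠ j := by
        rintro rfl; rw [Fin.val_last] at hjn; exact absurd hjn (lt_irrefl n)
      simp only [coeff, dif_pos hin, dif_pos hjn, Finset.mem_erase, hne_i, hne_j, true_and]
      by_cases hl : Fin.last n ∈ T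
      · simp only [if_pos hl, if_pos (And.intro hne_i hl), if_pos (And.intro hne_j hl)]
        rw [← map_mul sk.ι, ← map_mul sk.ι]
        exact congrArg _ (mul_comm _ _)
      · simp only [if_neg hl,
          if_neg (fun h => hl (And.right h) : ¬(Fin.last n ≠ i ∧ Fin.last n ∈ T)),
          if_neg (fun h => hl (And.right h) : ¬(Fin.last n ≠ j ∧ Fin.last n ∈ T))]
        rw [← map_mul sk.ι, ← map_mul sk.ι]
        exact congrArg _ (mul_comm _ _)
    · exact coeff_key sk x s hx T hi hj hij hin hjn
  · by_cases hjn : (j : ℕ) < n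
    · exact (coeff_key sk x s hx T hj hi hij.symm hjn hin).symm
    · exact absurd ((last_of_not_lt hin).trans (last_of_not_lt hjn).symm) hij

/-- Untyped differential on the free module over all finsets. -/
def dtgt (sk : LeftSkewPolynomialRing S φ B) (x s : Fin n → S)
    (T : Finset (Fin (n + 1))) : Finset (Fin (n + 1)) →₀ B :=
  ∑ i ∈ T, ((-1 : ℤ) ^ (T.filter fun j => j < i).card) •
    Finsupp.single (T.erase i) (coeff sk x s T i)

def Dmap (sk : LeftSkewPolynomialRing S φ B) (x s : Fin n → S) :
    (Finset (Fin (n + 1)) →₀ B) →ₗ[B] (Finset (Fin (n + 1)) →₀ B) :=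
  Finsupp.lsum ℕ fun T => toSpan (dtgt sk x s T)

lemma Dmap_single (sk : LeftSkewPolynomialRing S φ B) (x s : Fin n → S)
    (T : Finset (Fin (n + 1))) (b : B) :
    Dmap sk x s (Finsupp.single T b) = b • dtgt sk x s T := by
  simp [Dmap, toSpan]

lemma Dmap_dtgt (sk : LeftSkewPolynomialRing S φ B) (x s : Fin n → S)
    (hx : ∀ i, φ (x i) = s i * x i) (T : Finset (Fin (n + 1))) :
    Dmap sk x s (dtgt sk x s T) = 0 := by
  rw [dtgt, map_sum]
  have step : ∀ i ∈ T,
      Dmap sk x s (((-1 : ℤ) ^ (T.filter fun j => j < i).card) •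
          Finsupp.single (T.erase i) (coeff sk x s T i))
        = ∑ j ∈ T.erase i,
            Finsupp.single ((T.erase i).erase j)
              ((((-1 : ℤ) ^ (T.filter fun k => k < i).card *
                 (-1) ^ ((T.erase i).filter fun k => k < j).card)) •
               (coeff sk x s T i * coeff sk x s (T.erase i) j)) := by
    intro i _
    rw [map_zsmul, Dmap_single, dtgt, Finset.smul_sum, Finset.smul_sum]
    refine Finset.sum_congr rfl fun j _ => ?_
    rw [smul_comm (coeff sk x s T i), smul_smul, Finsupp.smul_single, smul_eq_mul,
      Finsupp.smul_single]
  rw [Finset.sum_congr rfl step, Finset.sum_sigma']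
  refine Finset.sum_involution (fun p _ => ⟨p.2, p.1⟩) ?_ ?_ ?_ ?_
  · rintro ⟨i, j⟩ hp
    simp only [Finset.mem_sigma] at hp
    obtain ⟨hiT, hjTi⟩ := hp
    have hjT : j ∈ T := (Finset.mem_erase.mp hjTi).2
    have hij : i ≠ j := fun h => (Finset.mem_erase.mp hjTi).1 h.symm
    have hsets : (T.erase j).erase i = (T.erase i).erase j := Finset.erase_right_comm
    rw [hsets, ← Finsupp.single_add, coeff_comm sk x s hx T hjT hiT hij.symm,
      sign_lemma T hjT hiT hij.symm, neg_smul, add_neg_cancel, Finsupp.single_zero]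
  · rintro ⟨i, j⟩ hp _
    simp only [Finset.mem_sigma] at hp
    intro h
    exact (Finset.mem_erase.mp hp.2).1 (congrArg Sigma.fst h)
  · rintro ⟨i, j⟩ hp
    simp only [Finset.mem_sigma] at hp ⊢
    exact ⟨(Finset.mem_erase.mp hp.2).2,
      Finset.mem_erase.mpr ⟨fun h => (Finset.mem_erase.mp hp.2).1 h.symm, hp.1⟩⟩
  · rintro ⟨i, j⟩ _
    rfl

/-- The embedding of `FK B n l` into the free module over all finsets. -/
def emb (B : Type*) [Ring B] (n l : ℕ) :
    FK B n l →ₗ[B] (Finset (Fin (n + 1)) →₀ B) :=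
  Finsupp.lmapDomain B B Subtype.val

lemma emb_injective : Function.Injective (emb B n l) :=
  Finsupp.mapDomain_injective Subtype.val_injective

lemma emb_single {l : ℕ} (t : {t : Finset (Fin (n + 1)) // t.card = l}) (b : B) :
    emb B n l (Finsupp.single t b) = Finsupp.single t.1 b := by
  simp [emb, Finsupp.lmapDomain_apply, Finsupp.mapDomain_single]

lemma emb_FKd (sk : LeftSkewPolynomialRing S φ B) (x s : Fin n → S) (l : ℕ) :
    (emb B n l).comp (FKd sk x s l) = (Dmap sk x s).comp (emb B n (l + 1)) := by
  refine Finsupp.lhom_ext fun T b => ?_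
  rw [LinearMap.comp_apply, LinearMap.comp_apply, emb_single, Dmap_single, FKd,
    Finsupp.lsum_single]
  show emb B n l (b • tgt sk x s l T) = _
  rw [map_smul]
  congr 1
  rw [tgt, map_sum, dtgt, ← Finset.sum_attach T.1 (fun i =>
    ((-1 : ℤ) ^ (T.1.filter fun j => j < i).card) •
      Finsupp.single (T.1.erase i) (coeff sk x s T.1 i))]
  refine Finset.sum_congr rfl fun i _ => ?_
  rw [map_zsmul, emb_single]

end PhiKoszul

end Aux


/-- Let `K` be a commutative ring, `S = K[x_1,…,x_n]`, and `φ : S → S` a flat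
`K`-algebra homomorphism with `φ(x_i) = s_i·x_i`.  Then consecutive differentials of the
`φ`-Koszul chain complex `FK_•(x_1,…,x_n)` compose to zero, i.e. `∂_l ∘ ∂_{l+1} = 0`
for all `l`; hence `FK_•(x_1,…,x_n)` is a chain complex of left `S[Θ;φ]`-modules. -/
theorem phiKoszul_comp_eq_zero
    {K : Type*} [CommRing K] {n : ℕ}
    (φ : MvPolynomial (Fin n) K →ₐ[K] MvPolynomial (Fin n) K)
    (hflat : (φ : MvPolynomial (Fin n) K →+* MvPolynomial (Fin n) K).Flat)
    (s : Fin n → MvPolynomial (Fin n) K)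
    (hs : ∀ i, φ (X i) = s i * X i)
    {B : Type*} [Ring B]
    (sk : LeftSkewPolynomialRing (MvPolynomial (Fin n) K)
      (φ : MvPolynomial (Fin n) K →+* MvPolynomial (Fin n) K) B) :
    ∀ l : ℕ, (FKd sk X s l).comp (FKd sk X s (l + 1)) = 0 := by
  
  intro l
  refine LinearMap.ext fun f => ?_
  have hx : ∀ i, (φ : MvPolynomial (Fin n) K →+* MvPolynomial (Fin n) K) (X i) = s i * X i := hs
  have h1 : (emb B n l).comp ((FKd sk X s l).comp (FKd sk X s (l + 1)))
      = ((Dmap sk X s).comp (Dmap sk X s)).comp (emb B n (l + 2)) := by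
    rw [← LinearMap.comp_assoc, emb_FKd, LinearMap.comp_assoc, emb_FKd,
      ← LinearMap.comp_assoc]
  have h2 : (Dmap sk X s).comp (Dmap sk X s) = 0 := by
    refine Finsupp.lhom_ext fun T b => ?_
    rw [LinearMap.comp_apply, Dmap_single, map_smul, Dmap_dtgt sk X s hx, smul_zero,
      LinearMap.zero_apply]
  apply emb_injective
  have := LinearMap.congr_fun h1 f
  rw [LinearMap.comp_apply, LinearMap.comp_apply] at this
  rw [LinearMap.comp_apply, this, h2, LinearMap.zero_comp, LinearMap.zero_apply,
    LinearMap.zero_apply, map_zero]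

end
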